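/- Let α, β be positive irrational numbers and α′, β′ real numbers. The two-sided Beatty sequences S_α = {⌊(n−α′)/α⌋ : n ∈ ℤ} and S_β = {⌊(n−β′)/β⌋ : n ∈ ℤ} tile ℤ (are disjoint with union ℤ) if and only if α+β = 1, α′+β′ ∈ ℤ, and kα+α′ is not an integer for any k ∈ ℤ. -/

import Mathlib

/-- The two-sided Beatty sequence `S_α = (⌊(n-α')/α⌋)_{n ∈ ℤ}`, as a set of integers. -/
def beattyZ (α α' : ℝ) : Set ℤ := {k | ∃ n : ℤ, k = ⌊((n : ℝ) - α') / α⌋}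


/-- ceil of a non-integer equals floor plus one. -/
lemma my_ceil_eq_floor_add_one {x : ℝ} (h : ¬∃ z : ℤ, x = (z:ℝ)) : ⌈x⌉ = ⌊x⌋ + 1 := by
  have h1 : ⌈x⌉ ≤ ⌊x⌋ + 1 := by
    rw [Int.ceil_le]; push_cast
    have := Int.lt_floor_add_one x
    linarith
  have h2 : ⌊x⌋ < ⌈x⌉ := by
    have hf : (⌊x⌋ : ℝ) < x := by
      rcases lt_or_eq_of_le (Int.floor_le x) with h' | h'
      · exact h'
      · exact absurd ⟨⌊x⌋, h'.symm⟩ h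
    exact Int.lt_ceil.2 hf
  omega

/-- Membership in a Beatty set via ceilings. -/
lemma my_mem_beatty {α α' : ℝ} (hα : 0 < α) (k : ℤ) :
    k ∈ beattyZ α α' ↔ ⌈(k:ℝ)*α + α'⌉ < ⌈((k:ℝ)+1)*α + α'⌉ := by
  constructor
  · rintro ⟨n, hn⟩
    rw [eq_comm, Int.floor_eq_iff] at hn
    obtain ⟨h1, h2⟩ := hn
    rw [le_div_iff₀ hα] at h1
    rw [div_lt_iff₀ hα] at h2
    have hn1 : (⌈(k:ℝ)*α + α'⌉ : ℝ) ≤ (n : ℝ) := by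
      exact_mod_cast Int.ceil_le.2 (by push_cast; linarith)
    refine Int.lt_ceil.2 ?_
    calc (⌈(k:ℝ)*α + α'⌉ : ℝ) ≤ n := hn1
    _ < ((k:ℝ)+1)*α + α' := by push_cast at h2 ⊢; linarith
  · intro h
    refine ⟨⌈(k:ℝ)*α + α'⌉, ?_⟩
    rw [eq_comm, Int.floor_eq_iff, le_div_iff₀ hα, div_lt_iff₀ hα]
    have h1 := Int.le_ceil ((k:ℝ)*α + α')
    have h2 : (⌈(k:ℝ)*α + α'⌉ : ℝ) < ((k:ℝ)+1)*α + α' := by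
      have := Int.lt_ceil.1 h
      -- (⌈x⌉:ℝ) < y from ⌈x⌉ < ⌈y⌉ : ⌈x⌉ ≤ ⌈y⌉-1 < y
      have h3 : (⌈(k:ℝ)*α + α'⌉ : ℝ) ≤ (⌈((k:ℝ)+1)*α + α'⌉ : ℝ) - 1 := by
        have : ⌈(k:ℝ)*α + α'⌉ ≤ ⌈((k:ℝ)+1)*α + α'⌉ - 1 := by omega
        exact_mod_cast this
      have h4 := Int.ceil_lt_add_one (((k:ℝ)+1)*α + α')
      linarith
    constructor <;> push_cast <;> linarith

/-- monotone step -/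
lemma my_mono {α α' : ℝ} (hα : 0 < α) (k : ℤ) :
    ⌈(k:ℝ)*α + α'⌉ ≤ ⌈((k:ℝ)+1)*α + α'⌉ :=
  Int.ceil_le_ceil (by nlinarith)

lemma my_step_le {α α' : ℝ} (hα : α ≤ 1) (k : ℤ) :
    ⌈((k:ℝ)+1)*α + α'⌉ ≤ ⌈(k:ℝ)*α + α'⌉ + 1 := by
  rw [Int.ceil_le]
  have := Int.le_ceil ((k:ℝ)*α + α')
  push_cast
  nlinarith


lemma my_dense_orbit {α : ℝ} (hαi : Irrational α) (α' : ℝ) {a b : ℝ} (hab : a < b) :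
    ∃ k m : ℤ, a < (k:ℝ)*α + α' + m ∧ (k:ℝ)*α + α' + m < b := by
  set S : AddSubgroup ℝ :=
    { carrier := {x | ∃ k m : ℤ, x = (k:ℝ)*α + m}
      zero_mem' := ⟨0, 0, by push_cast; ring⟩
      add_mem' := by
        rintro x y ⟨k1, m1, rfl⟩ ⟨k2, m2, rfl⟩
        exact ⟨k1 + k2, m1 + m2, by push_cast; ring⟩
      neg_mem' := by
        rintro x ⟨k1, m1, rfl⟩
        exact ⟨-k1, -m1, by push_cast; ring⟩ } with hS
  have hdense : Dense (S : Set ℝ) := by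
    rcases S.dense_or_cyclic with h | ⟨g, hg⟩
    · exact h
    · exfalso
      have h1 : (1:ℝ) ∈ S := ⟨0, 1, by push_cast; ring⟩
      have h2 : α ∈ S := ⟨1, 0, by push_cast; ring⟩
      rw [hg, AddSubgroup.mem_closure_singleton] at h1 h2
      obtain ⟨n, hn⟩ := h1
      obtain ⟨m, hm⟩ := h2
      rw [zsmul_eq_mul] at hn hm
      have hn0 : (n:ℝ) ≠ 0 := by
        intro h; rw [h, zero_mul] at hn; exact one_ne_zero hn.symm
      refine hαi ⟨(m:ℚ)/(n:ℚ), ?_⟩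
      have hg0 : g = 1/(n:ℝ) := by field_simp at hn ⊢; linarith
      rw [hg0] at hm
      push_cast
      rw [← hm]
      field_simp
  obtain ⟨x, hxS, hx⟩ := hdense.exists_between (show a - α' < b - α' by linarith)
  obtain ⟨k, m, rfl⟩ := hxS
  exact ⟨k, m, by cases hx; constructor <;> linarith⟩

lemma my_dense_fract {α : ℝ} (hαi : Irrational α) (α' : ℝ) {a b : ℝ}
    (h0 : 0 ≤ a) (h1 : b ≤ 1) (hab : a < b) :
    ∃ k : ℤ, a < Int.fract ((k:ℝ)*α + α') ∧ Int.fract ((k:ℝ)*α + α') < b := by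
  obtain ⟨k, m, hm1, hm2⟩ := my_dense_orbit hαi α' hab
  refine ⟨k, ?_⟩
  have : Int.fract ((k:ℝ)*α + α') = (k:ℝ)*α + α' + m := by
    rw [← Int.fract_add_intCast ((k:ℝ)*α + α') m]
    have e1 : (0:ℝ) ≤ (k:ℝ)*α + α' + m := by linarith
    have e2 : (k:ℝ)*α + α' + m < 1 := by linarith
    exact Int.fract_eq_self.2 ⟨e1, e2⟩
  rw [this]; exact ⟨hm1, hm2⟩

lemma my_ceil_int_add {m : ℤ} {t : ℝ} (h0 : 0 < t) (h1 : t ≤ 1) : ⌈(m:ℝ) + t⌉ = m + 1 := by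
  rw [add_comm, Int.ceil_add_intCast]
  have : ⌈t⌉ = 1 := by
    rw [Int.ceil_eq_iff]
    constructor <;> push_cast <;> linarith
  omega

lemma my_ceil_ne_int {x : ℝ} (h : 0 < Int.fract x) : ⌈x⌉ = ⌊x⌋ + 1 := by
  refine my_ceil_eq_floor_add_one ?_
  rintro ⟨z, rfl⟩
  simp at h

lemma my_pair_low {x s : ℝ} (h1 : 0 < Int.fract x) (h2 : Int.fract x < Int.fract s) :
    ⌈x⌉ + ⌈s - x⌉ = ⌊s⌋ + 2 := by
  have hx := Int.floor_add_fract x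
  have hs := Int.floor_add_fract s
  have e : s - x = ((⌊s⌋ - ⌊x⌋ : ℤ) : ℝ) + (Int.fract s - Int.fract x) := by
    push_cast; linarith
  have h3 : Int.fract s < 1 := Int.fract_lt_one s
  rw [e, my_ceil_int_add (by linarith) (by linarith), my_ceil_ne_int h1]
  ring

lemma my_pair_high {x s : ℝ} (h1 : Int.fract s < Int.fract x) :
    ⌈x⌉ + ⌈s - x⌉ = ⌊s⌋ + 1 := by
  have hx := Int.floor_add_fract x
  have hs := Int.floor_add_fract s
  have h0 : 0 ≤ Int.fract s := Int.fract_nonneg s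
  have h3 : Int.fract x < 1 := Int.fract_lt_one x
  have e : s - x = ((⌊s⌋ - ⌊x⌋ - 1 : ℤ) : ℝ) + (Int.fract s - Int.fract x + 1) := by
    push_cast; linarith
  rw [e, my_ceil_int_add (by linarith) (by linarith), my_ceil_ne_int (by linarith)]
  ring

lemma my_sum_id {α β α' β' : ℝ} (hab : α + β = 1) {z : ℤ} (hz : α' + β' = (z:ℝ))
    (hni : ∀ k : ℤ, ¬ ∃ w : ℤ, (k : ℝ) * α + α' = (w : ℝ)) (k : ℤ) :
    ⌈(k:ℝ)*α + α'⌉ + ⌈(k:ℝ)*β + β'⌉ = k + z + 1 := by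
  have h1 : ⌈(k:ℝ)*α + α'⌉ = ⌊(k:ℝ)*α + α'⌋ + 1 := my_ceil_eq_floor_add_one (hni k)
  have h2 : (k:ℝ)*β + β' = (-((k:ℝ)*α + α')) + ((z + k : ℤ) : ℝ) := by
    push_cast; linear_combination (k:ℝ) * hab + hz
  have h3 : ⌈(k:ℝ)*β + β'⌉ = -⌊(k:ℝ)*α + α'⌋ + (z + k) := by
    rw [h2, Int.ceil_add_intCast, Int.ceil_neg]
  omega

lemma my_forward {α β α' β' : ℝ} (hα : 0 < α) (hβ : 0 < β) (hab : α + β = 1)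
    {z : ℤ} (hz : α' + β' = (z:ℝ))
    (hni : ∀ k : ℤ, ¬ ∃ w : ℤ, (k : ℝ) * α + α' = (w : ℝ)) :
    Disjoint (beattyZ α α') (beattyZ β β') ∧ beattyZ α α' ∪ beattyZ β β' = Set.univ := by
  have key : ∀ k : ℤ, ⌈(k:ℝ)*α + α'⌉ + ⌈(k:ℝ)*β + β'⌉ = k + z + 1 :=
    my_sum_id hab hz hni
  have key1 : ∀ k : ℤ, ⌈((k:ℝ)+1)*α + α'⌉ + ⌈((k:ℝ)+1)*β + β'⌉ = k + 1 + z + 1 := by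
    intro k
    have := key (k+1)
    push_cast at this ⊢
    convert this using 3 <;> push_cast <;> ring
  constructor
  · rw [Set.disjoint_left]
    intro k hka hkb
    rw [my_mem_beatty hα] at hka
    rw [my_mem_beatty hβ] at hkb
    have := key k; have := key1 k
    omega
  · rw [Set.eq_univ_iff_forall]
    intro k
    have h1 := my_mono (α' := α') hα k
    have h2 := my_mono (α' := β') hβ k
    have := key k; have := key1 k
    rcases lt_or_eq_of_le h1 with h | h
    · exact Or.inl ((my_mem_beatty hα k).2 h)
    · refine Or.inr ((my_mem_beatty hβ k).2 (by omega))

lemma my_lt_one {α α' β β' : ℝ} (hα : 0 < α) (hβ : 0 < β)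
    (hd : Disjoint (beattyZ α α') (beattyZ β β')) : α < 1 := by
  by_contra h
  push_neg at h
  set k₀ : ℤ := ⌊((0:ℝ) - β') / β⌋ with hk₀
  have hkβ : k₀ ∈ beattyZ β β' := ⟨0, by exact_mod_cast hk₀⟩
  have hkα : k₀ ∈ beattyZ α α' := by
    rw [my_mem_beatty hα]
    refine Int.lt_ceil.2 ?_
    have := Int.ceil_lt_add_one ((k₀:ℝ)*α + α')
    nlinarith
  exact Set.disjoint_left.1 hd hkα hkβ

lemma my_converse {α β α' β' : ℝ} (hα : 0 < α) (hβ : 0 < β)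
    (hαi : Irrational α) (hβi : Irrational β)
    (hd : Disjoint (beattyZ α α') (beattyZ β β'))
    (hu : beattyZ α α' ∪ beattyZ β β' = Set.univ) :
    α + β = 1 ∧ (∃ z : ℤ, α' + β' = (z : ℝ)) ∧
      ∀ k : ℤ, ¬ ∃ z : ℤ, (k : ℝ) * α + α' = (z : ℝ) := by
  have hα1 : α < 1 := my_lt_one hα hβ hd
  have hβ1 : β < 1 := my_lt_one hβ hα hd.symm
  have hd' : ∀ k : ℤ, ¬(k ∈ beattyZ α α' ∧ k ∈ beattyZ β β') :=
    fun k ⟨h1, h2⟩ => Set.disjoint_left.1 hd h1 h2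
  have hu' : ∀ k : ℤ, k ∈ beattyZ α α' ∨ k ∈ beattyZ β β' := by
    intro k
    have : k ∈ beattyZ α α' ∪ beattyZ β β' := hu ▸ Set.mem_univ k
    exact this
  -- one-step constancy
  have hG1 : ∀ k : ℤ, ⌈((k+1:ℤ):ℝ)*α + α'⌉ + ⌈((k+1:ℤ):ℝ)*β + β'⌉
      = ⌈(k:ℝ)*α + α'⌉ + ⌈(k:ℝ)*β + β'⌉ + 1 := by
    intro k
    push_cast
    have h1 := my_mono (α' := α') hα k
    have h2 := my_mono (α' := β') hβ k
    have h3 := my_step_le (α' := α') hα1.le k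
    have h4 := my_step_le (α' := β') hβ1.le k
    rcases hu' k with h | h
    · rw [my_mem_beatty hα] at h
      have h5 : ¬ (k ∈ beattyZ β β') := fun hh => hd' k ⟨(my_mem_beatty hα k).2 h, hh⟩
      rw [my_mem_beatty hβ] at h5
      push_neg at h5
      omega
    · rw [my_mem_beatty hβ] at h
      have h5 : ¬ (k ∈ beattyZ α α') := fun hh => hd' k ⟨hh, (my_mem_beatty hβ k).2 h⟩
      rw [my_mem_beatty hα] at h5
      push_neg at h5
      omega
  -- global constancy
  have hG : ∀ k : ℤ, ⌈(k:ℝ)*α + α'⌉ + ⌈(k:ℝ)*β + β'⌉ = ⌈α'⌉ + ⌈β'⌉ + k := by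
    intro k
    induction k using Int.induction_on with
    | zero => simp
    | succ n ih =>
      have := hG1 n
      push_cast at this ih ⊢
      omega
    | pred n ih =>
      have := hG1 (-(n:ℤ) - 1)
      rw [show (-(n:ℤ) - 1) + 1 = -(n:ℤ) by ring] at this
      push_cast at this ih ⊢
      omega
  -- α + β = 1
  have habd : α + β = 1 := by
    by_contra hne
    have hdne : α + β - 1 ≠ 0 := fun h => hne (by linarith)
    set C : ℝ := ((⌈α'⌉ + ⌈β'⌉ : ℤ) : ℝ) - (α' + β') with hC
    have hbound : ∀ k : ℤ, (k:ℝ) * (α + β - 1) ≤ C := by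
      intro k
      have h1 := Int.le_ceil ((k:ℝ)*α + α')
      have h2 := Int.le_ceil ((k:ℝ)*β + β')
      have h3 := hG k
      have h4 : ((⌈(k:ℝ)*α + α'⌉ + ⌈(k:ℝ)*β + β'⌉ : ℤ) : ℝ)
          = ((⌈α'⌉ + ⌈β'⌉ + k : ℤ) : ℝ) := by exact_mod_cast h3
      push_cast at h4
      rw [hC]; push_cast
      nlinarith
    obtain ⟨n, hn⟩ := exists_nat_gt (C / |α + β - 1|)
    have habs : 0 < |α + β - 1| := abs_pos.2 hdne
    have hgt : C < (n:ℝ) * |α + β - 1| := by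
      rw [div_lt_iff₀ habs] at hn; linarith
    rcases lt_or_gt_of_ne hdne with h | h
    · have := hbound (-(n:ℤ))
      rw [abs_of_neg h] at hgt
      push_cast at this
      nlinarith
    · have := hbound (n:ℤ)
      rw [abs_of_pos h] at hgt
      push_cast at this
      nlinarith
  -- rewrite constancy as pair form
  set s : ℝ := α' + β' with hs
  set c : ℤ := ⌈α'⌉ + ⌈β'⌉ with hcdef
  have hc : ∀ k : ℤ, ⌈(k:ℝ)*α + α'⌉ + ⌈s - ((k:ℝ)*α + α')⌉ = c := by
    intro k
    have h1 := hG k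
    have h2 : (k:ℝ)*β + β' = (s - ((k:ℝ)*α + α')) + ((k:ℤ):ℝ) := by
      push_cast
      linear_combination (k:ℝ) * habd
    rw [h2, Int.ceil_add_intCast] at h1
    omega
  -- no integer points
  have hni : ∀ k : ℤ, ¬ ∃ z : ℤ, (k : ℝ) * α + α' = (z : ℝ) := by
    rintro k₀ ⟨w, hw⟩
    have hc0 := hc k₀
    rw [hw, Int.ceil_intCast, Int.ceil_sub_intCast] at hc0
    have hceq : c = ⌈s⌉ := by omega
    have hk1 : ¬ ∃ z : ℤ, ((k₀+1:ℤ):ℝ) * α + α' = (z : ℝ) := by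
      rintro ⟨w1, hw1⟩
      refine hαi ⟨(w1 : ℚ) - (w : ℚ), ?_⟩
      push_cast at hw1 ⊢
      linarith
    have h1 := hc (k₀ + 1)
    have h2 : ⌈((k₀+1:ℤ):ℝ) * α + α'⌉ = ⌊((k₀+1:ℤ):ℝ) * α + α'⌋ + 1 :=
      my_ceil_eq_floor_add_one hk1
    have hcs : s < (c:ℝ) := by
      have h1' : ((⌈((k₀+1:ℤ):ℝ) * α + α'⌉ : ℤ):ℝ) + ((⌈s - (((k₀+1:ℤ):ℝ) * α + α')⌉ : ℤ):ℝ)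
          = (c:ℝ) := by exact_mod_cast h1
      have h2' : ((⌈((k₀+1:ℤ):ℝ) * α + α'⌉ : ℤ):ℝ) = ((⌊((k₀+1:ℤ):ℝ) * α + α'⌋ : ℤ):ℝ) + 1 := by
        exact_mod_cast h2
      have h3 := Int.sub_one_lt_floor (((k₀+1:ℤ):ℝ) * α + α')
      have h4 := Int.le_ceil (s - (((k₀+1:ℤ):ℝ) * α + α'))
      linarith
    have hσ0 : 0 < Int.fract s := by
      rcases lt_or_eq_of_le (Int.fract_nonneg s) with h | h
      · exact h
      · exfalso
        have hfl : s ≤ ((⌊s⌋:ℤ):ℝ) := by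
          have h5 := Int.floor_add_fract s; rw [← h] at h5; linarith
        have h6 : ⌈s⌉ ≤ ⌊s⌋ := Int.ceil_le.2 hfl
        have h7 : c ≤ ⌊s⌋ := by omega
        have h8 : ((⌊s⌋:ℤ):ℝ) ≤ s := Int.floor_le s
        have h9 : (c:ℝ) ≤ ((⌊s⌋:ℤ):ℝ) := by exact_mod_cast h7
        linarith
    obtain ⟨k, hk1', hk2'⟩ := my_dense_fract hαi α' (le_refl (0:ℝ)) (Int.fract_lt_one s).le hσ0
    have hplow := my_pair_low hk1' hk2'
    have h10 := hc k
    rw [hplow] at h10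
    have hle : ⌈s⌉ ≤ ⌊s⌋ + 1 := by
      rw [Int.ceil_le]; push_cast
      have := Int.lt_floor_add_one s; linarith
    omega
  refine ⟨habd, ?_, hni⟩
  -- s is an integer
  by_contra hns
  have hσ0 : 0 < Int.fract s := by
    rcases lt_or_eq_of_le (Int.fract_nonneg s) with h | h
    · exact h
    · exfalso
      refine hns ⟨⌊s⌋, ?_⟩
      have := Int.floor_add_fract s; rw [← h] at this; linarith
  obtain ⟨k1, hk11, hk12⟩ := my_dense_fract hαi α' (le_refl (0:ℝ)) (Int.fract_lt_one s).le hσ0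
  obtain ⟨k2, hk21, hk22⟩ := my_dense_fract hαi α' (Int.fract_nonneg s) le_rfl (Int.fract_lt_one s)
  have e1 := hc k1
  have e2 := hc k2
  rw [my_pair_low hk11 hk12] at e1
  rw [my_pair_high hk21] at e2
  omega


theorem stmt2 (α β α' β' : ℝ) (hα : 0 < α) (hβ : 0 < β)
    (hαi : Irrational α) (hβi : Irrational β) :
    (Disjoint (beattyZ α α') (beattyZ β β') ∧ beattyZ α α' ∪ beattyZ β β' = Set.univ) ↔
      (α + β = 1 ∧ (∃ z : ℤ, α' + β' = (z : ℝ)) ∧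
        ∀ k : ℤ, ¬ ∃ z : ℤ, (k : ℝ) * α + α' = (z : ℝ)) := by
  constructor
  · rintro ⟨hd, hu⟩
    exact my_converse hα hβ hαi hβi hd hu
  · rintro ⟨hab, ⟨z, hz⟩, hni⟩
    exact my_forward hα hβ hab hz hni
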